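/- Let H^m_{q,t} denote the two-parameter symmetrization operator on Laurent polynomials in x_1,…,x_m defined by H^m_{q,t}(φ(x)) = Σ_{w ∈ S_m} w( φ(x) ∏_{i<j} (1 − qt x_i/x_j) / ∏_{i<j} ((1 − x_j/x_i)(1 − q x_i/x_j)(1 − t x_i/x_j)) ). If f(z_1,…,z_m) is a rational function antisymmetric in z_i and z_{i+1}, then H^m_{q,t}( Ω[M z_i/z_{i+1}] · f(z) ) = 0, where Ω[Mz] = (1−qz)(1−tz)/((1−z)(1−qtz)). -/

import Mathlib

set_option maxHeartbeats 1000000 in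
/-- In the field `F` of rational functions in `x 0, …, x (m-1)`, with the symmetric
group acting by permuting the variables (`φ`), the two-parameter symmetrization
operator `H^m_{q,t}` kills `Ω[M x_{i₀}/x_{i₀+1}] · f` whenever `f` is antisymmetric
in `x_{i₀}` and `x_{i₀+1}`.  Here `Ω[Mz] = (1−qz)(1−tz)/((1−z)(1−qtz))` and
`H^m_{q,t}(φ(x)) = Σ_{w∈S_m} w(φ(x) ∏_{i<j}(1−qt xᵢ/xⱼ) /
∏_{i<j}((1−xⱼ/xᵢ)(1−q xᵢ/xⱼ)(1−t xᵢ/xⱼ)))`. -/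
theorem extended_delta_stmt5 {F : Type*} [Field F] (m : ℕ)
    (φ : Equiv.Perm (Fin m) →* (F ≃+* F)) (x : Fin m → F) (q t : F)
    (hx : ∀ (σ : Equiv.Perm (Fin m)) (i : Fin m), φ σ (x i) = x (σ i))
    (hq : ∀ σ, φ σ q = q) (ht : ∀ σ, φ σ t = t)
    (hnz : ∀ i j : Fin m, i ≠ j →
      x j ≠ 0 ∧ (1 - x j / x i) ≠ 0 ∧ (1 - q * (x i / x j)) ≠ 0 ∧
      (1 - t * (x i / x j)) ≠ 0 ∧ (1 - q * t * (x i / x j)) ≠ 0)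
    (i₀ i₁ : Fin m) (h01 : (i₁ : ℕ) = (i₀ : ℕ) + 1)
    (f : F) (hf : φ (Equiv.swap i₀ i₁) f = -f) :
    ∑ w : Equiv.Perm (Fin m),
      φ w (((1 - q * (x i₀ / x i₁)) * (1 - t * (x i₀ / x i₁)) /
              ((1 - x i₀ / x i₁) * (1 - q * t * (x i₀ / x i₁)))) * f *
        (∏ p ∈ Finset.univ.filter (fun p : Fin m × Fin m => p.1 < p.2),
            (1 - q * t * (x p.1 / x p.2))) /
        (∏ p ∈ Finset.univ.filter (fun p : Fin m × Fin m => p.1 < p.2),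
            ((1 - x p.2 / x p.1) * (1 - q * (x p.1 / x p.2)) *
              (1 - t * (x p.1 / x p.2))))) = 0 := by
  have hne : i₀ ≠ i₁ := by
    intro h
    rw [h] at h01; omega
  set s : Equiv.Perm (Fin m) := Equiv.swap i₀ i₁ with hs
  have ha0 : x i₀ ≠ 0 := (hnz i₁ i₀ (Ne.symm hne)).1
  obtain ⟨hb0, h1, h2, h3, h4⟩ := hnz i₀ i₁ hne
  obtain ⟨-, h5, h6, h7, h8⟩ := hnz i₁ i₀ (Ne.symm hne)
  have hi01 : i₀ < i₁ := by rw [Fin.lt_def]; omega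
  set S := Finset.univ.filter (fun p : Fin m × Fin m => p.1 < p.2) with hS
  have hmem : (i₀, i₁) ∈ S := by simp [hS, hi01]
  set E : F := ((1 - q * (x i₀ / x i₁)) * (1 - t * (x i₀ / x i₁)) /
              ((1 - x i₀ / x i₁) * (1 - q * t * (x i₀ / x i₁)))) * f *
        (∏ p ∈ S, (1 - q * t * (x p.1 / x p.2))) /
        (∏ p ∈ S, ((1 - x p.2 / x p.1) * (1 - q * (x p.1 / x p.2)) *
              (1 - t * (x p.1 / x p.2)))) with hE
  have hsi0 : s i₀ = i₁ := Equiv.swap_apply_left i₀ i₁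
  have hsi1 : s i₁ = i₀ := Equiv.swap_apply_right i₀ i₁
  have hsval : ∀ j : Fin m, ((s j : ℕ) = (i₁ : ℕ) ∧ (j : ℕ) = (i₀ : ℕ)) ∨
      ((s j : ℕ) = (i₀ : ℕ) ∧ (j : ℕ) = (i₁ : ℕ)) ∨
      ((s j : ℕ) = (j : ℕ) ∧ (j : ℕ) ≠ (i₀ : ℕ) ∧ (j : ℕ) ≠ (i₁ : ℕ)) := by
    intro j
    rcases eq_or_ne j i₀ with h | h
    · left; subst h; rw [hsi0]; exact ⟨rfl, rfl⟩
    · rcases eq_or_ne j i₁ with h' | h'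
      · right; left; subst h'; rw [hsi1]; exact ⟨rfl, rfl⟩
      · right; right
        rw [hs, Equiv.swap_apply_of_ne_of_ne h h']
        exact ⟨rfl, fun hh => h (Fin.ext hh), fun hh => h' (Fin.ext hh)⟩
  have hswapmem : ∀ p : Fin m × Fin m, p ∈ S \ {(i₀, i₁)} → (s p.1, s p.2) ∈ S \ {(i₀, i₁)} := by
    intro p hp
    simp only [hS, Finset.mem_sdiff, Finset.mem_filter, Finset.mem_univ, true_and,
      Finset.mem_singleton] at hp ⊢
    obtain ⟨hlt, hne'⟩ := hp
    rw [Fin.lt_def] at hlt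
    have hne'' : ¬((p.1 : ℕ) = (i₀ : ℕ) ∧ (p.2 : ℕ) = (i₁ : ℕ)) := by
      rintro ⟨u1, u2⟩
      exact hne' (Prod.ext_iff.mpr ⟨Fin.ext u1, Fin.ext u2⟩)
    refine ⟨?_, ?_⟩
    · rw [Fin.lt_def]
      rcases hsval p.1 with ⟨e1, e2⟩ | ⟨e1, e2⟩ | ⟨e1, e2, e3⟩ <;>
        rcases hsval p.2 with ⟨d1, d2⟩ | ⟨d1, d2⟩ | ⟨d1, d2, d3⟩ <;> omega
    · intro h
      rw [Prod.mk.injEq] at h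
      have u1 : ((s p.1 : Fin m) : ℕ) = (i₀ : ℕ) := congrArg Fin.val h.1
      have u2 : ((s p.2 : Fin m) : ℕ) = (i₁ : ℕ) := congrArg Fin.val h.2
      rcases hsval p.1 with ⟨e1, e2⟩ | ⟨e1, e2⟩ | ⟨e1, e2, e3⟩ <;>
        rcases hsval p.2 with ⟨d1, d2⟩ | ⟨d1, d2⟩ | ⟨d1, d2, d3⟩ <;> omega
  have hswapinv : ∀ p : Fin m × Fin m, (s (s p.1), s (s p.2)) = p := by
    intro p; simp [hs]
  have hre : ∀ g : Fin m → Fin m → F,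
      ∏ p ∈ S \ {(i₀, i₁)}, g (s p.1) (s p.2) = ∏ p ∈ S \ {(i₀, i₁)}, g p.1 p.2 := by
    intro g
    refine Finset.prod_nbij' (fun p => (s p.1, s p.2)) (fun p => (s p.1, s p.2))
      hswapmem hswapmem (fun p _ => hswapinv p) (fun p _ => hswapinv p) (fun p _ => rfl)
  have hkey : φ s E = -E := by
    simp only [hE, map_mul, map_div₀, map_sub, map_one, map_prod, hx, hq, ht, hf, hsi0, hsi1]
    rw [Finset.prod_eq_mul_prod_sdiff_singleton_of_mem hmem
        (fun p => (1 - q * t * (x (s p.1) / x (s p.2)))),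
      Finset.prod_eq_mul_prod_sdiff_singleton_of_mem hmem
        (fun p => ((1 - x (s p.2) / x (s p.1)) * (1 - q * (x (s p.1) / x (s p.2))) *
          (1 - t * (x (s p.1) / x (s p.2))))),
      Finset.prod_eq_mul_prod_sdiff_singleton_of_mem hmem
        (fun p => (1 - q * t * (x p.1 / x p.2))),
      Finset.prod_eq_mul_prod_sdiff_singleton_of_mem hmem
        (fun p => ((1 - x p.2 / x p.1) * (1 - q * (x p.1 / x p.2)) *
          (1 - t * (x p.1 / x p.2))))]
    simp only [hre (fun i j => 1 - q * t * (x i / x j)),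
      hre (fun i j => (1 - x j / x i) * (1 - q * (x i / x j)) * (1 - t * (x i / x j))),
      hsi0, hsi1]
    have hQ0ne : (∏ p ∈ S \ {(i₀, i₁)},
        ((1 - x p.2 / x p.1) * (1 - q * (x p.1 / x p.2)) * (1 - t * (x p.1 / x p.2)))) ≠ 0 := by
      apply Finset.prod_ne_zero_iff.mpr
      intro p hp
      have hp' : p.1 ≠ p.2 := by
        simp only [hS, Finset.mem_sdiff, Finset.mem_filter] at hp
        exact ne_of_lt hp.1.2
      obtain ⟨-, a1, a2, a3, -⟩ := hnz p.1 p.2 hp'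
      exact mul_ne_zero (mul_ne_zero a1 a2) a3
    generalize hP0 : (∏ p ∈ S \ {(i₀, i₁)}, (1 - q * t * (x p.1 / x p.2))) = P0
    generalize hQ0 : (∏ p ∈ S \ {(i₀, i₁)},
        ((1 - x p.2 / x p.1) * (1 - q * (x p.1 / x p.2)) * (1 - t * (x p.1 / x p.2)))) = Q0
    rw [hQ0] at hQ0ne
    generalize hA1 : (1 - x i₀ / x i₁) = A1
    generalize hA2 : (1 - q * (x i₀ / x i₁)) = A2
    generalize hA3 : (1 - t * (x i₀ / x i₁)) = A3
    generalize hA4 : (1 - q * t * (x i₀ / x i₁)) = A4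
    generalize hB1 : (1 - x i₁ / x i₀) = B1
    generalize hB2 : (1 - q * (x i₁ / x i₀)) = B2
    generalize hB3 : (1 - t * (x i₁ / x i₀)) = B3
    generalize hB4 : (1 - q * t * (x i₁ / x i₀)) = B4
    rw [hA1] at h5
    rw [hA2] at h2
    rw [hA3] at h3
    rw [hA4] at h4
    rw [hB1] at h1
    rw [hB2] at h6
    rw [hB3] at h7
    rw [hB4] at h8
    field_simp
  classical
  refine Finset.sum_ninvolution (fun w => w * s) ?_ ?_ (fun w => Finset.mem_univ _) ?_
  · intro w
    have : φ (w * s) E = φ w (φ s E) := by rw [map_mul]; rfl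
    rw [this, hkey, map_neg, add_neg_cancel]
  · intro w _ h
    have hs1 : s = 1 := mul_left_cancel (h.trans (mul_one w).symm)
    rw [hs] at hs1
    exact hne (by simpa using hs1)
  · intro w
    show w * s * s = w
    rw [mul_assoc, hs, Equiv.swap_mul_self, mul_one]
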